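/- arXiv:1312.3182 — 2 statements merged into one kernel-verified Lean document; each statement's English description precedes it below -/
import Mathlib

section
/- In the even cycle C_{2n}, every center set A satisfies |A| ≤ ⌊4n/3⌋ or |A| = 2n. -/
/-- The `S`-eccentricity of a vertex `v`. -/
noncomputable def sEcc {V : Type*} (G : SimpleGraph V) (S : Finset V) (v : V) : ℕ :=
  S.sup fun x => G.dist v x

/-- The `S`-center of `G`. -/
noncomputable def sCenter {V : Type*} (G : SimpleGraph V) (S : Finset V) : Set V :=
  {v | ∀ w, sEcc G S v ≤ sEcc G S w}

/-- `A` is a center set of `G` if it is the `S`-center for some nonempty set `S`. -/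
def IsCenterSet {V : Type*} (G : SimpleGraph V) (A : Set V) : Prop :=
  ∃ S : Finset V, S.Nonempty ∧ sCenter G S = A

open Fin.CommRing Fin.NatCast

section aux

variable {m : ℕ} [NeZero m]

omit [NeZero m] in
lemma fin_val_add (a b : Fin m) :
    (a + b).val = if a.val + b.val < m then a.val + b.val else a.val + b.val - m := by
  have ha := a.is_lt; have hb := b.is_lt
  have h0 : (a + b).val = (a.val + b.val) % m := Fin.val_add a b
  rw [h0]
  split_ifs with h
  · exact Nat.mod_eq_of_lt h
  · rw [Nat.mod_eq_sub_mod (by omega), Nat.mod_eq_of_lt (by omega)]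

omit [NeZero m] in
lemma fin_val_sub (a b : Fin m) :
    (a - b).val = if b.val ≤ a.val then a.val - b.val else a.val + m - b.val := by
  have ha := a.is_lt; have hb := b.is_lt
  have h0 : (a - b).val = ((m - b.val) + a.val) % m := rfl
  rw [h0]
  split_ifs with h
  · rw [show (m - b.val) + a.val = m + (a.val - b.val) by omega,
      Nat.add_mod_left, Nat.mod_eq_of_lt (by omega)]
  · rw [Nat.mod_eq_of_lt (by omega)]
    omega

lemma fin_val_one (hm : 2 ≤ m) : ((1 : Fin m) : ℕ) = 1 := by
  rw [Fin.val_one', Nat.mod_eq_of_lt (by omega)]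

lemma cyc_adj_add_one (hm : 2 ≤ m) (v : Fin m) :
    (SimpleGraph.cycleGraph m).Adj v (v + 1) := by
  rw [SimpleGraph.cycleGraph_adj']
  right
  rw [add_sub_cancel_left, fin_val_one hm]

lemma cyc_walk_exists (hm : 2 ≤ m) (u : Fin m) (k : ℕ) :
    ∃ p : (SimpleGraph.cycleGraph m).Walk u (u + (k : Fin m)), p.length = k := by
  induction k with
  | zero => exact ⟨(SimpleGraph.Walk.nil).copy rfl (by simp), by simp⟩
  | succ k ih =>
    obtain ⟨p, hp⟩ := ih
    refine ⟨(p.concat (cyc_adj_add_one hm _)).copy rfl (by push_cast; ring), ?_⟩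
    simp [hp]

lemma cyc_dist_le (hm : 2 ≤ m) (u v : Fin m) :
    (SimpleGraph.cycleGraph m).dist u v ≤ (v - u).val := by
  obtain ⟨p, hp⟩ := cyc_walk_exists hm u (v - u).val
  have he : u + (((v - u).val : ℕ) : Fin m) = v := by
    rw [Fin.cast_val_eq_self]; ring
  calc (SimpleGraph.cycleGraph m).dist u v ≤ (p.copy rfl he).length :=
        SimpleGraph.dist_le _
    _ = (v - u).val := by rw [SimpleGraph.Walk.length_copy, hp]

lemma cyc_reachable (hm : 2 ≤ m) (u v : Fin m) :
    (SimpleGraph.cycleGraph m).Reachable u v := by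
  obtain ⟨p, _⟩ := cyc_walk_exists hm u (v - u).val
  have he : u + (((v - u).val : ℕ) : Fin m) = v := by
    rw [Fin.cast_val_eq_self]; ring
  exact ⟨p.copy rfl he⟩

lemma fin_val_neg (w : Fin m) (hw : w ≠ 0) : (-w).val = m - w.val := by
  have h1 : 1 ≤ w.val := by
    rcases Nat.eq_zero_or_pos w.val with h | h
    · exact absurd (Fin.ext h) hw
    · exact h
  rw [show -w = 0 - w by ring, fin_val_sub]
  rw [if_neg (show ¬ (w.val ≤ (0 : Fin m).val) by simp only [Fin.val_zero]; omega)]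
  simp only [Fin.val_zero]
  omega

lemma cyc_min_le_length (hm : 2 ≤ m) {u v : Fin m}
    (p : (SimpleGraph.cycleGraph m).Walk u v) :
    min (v - u).val (m - (v - u).val) ≤ p.length := by
  induction p with
  | nil => simp
  | @cons u w v h q ih =>
    have hstep : min (v - u).val (m - (v - u).val)
        ≤ min (v - w).val (m - (v - w).val) + 1 := by
      set c := v - w with hc
      have hcv := c.is_lt
      rw [SimpleGraph.cycleGraph_adj'] at h
      rcases h with h | h
      · -- (u - w).val = 1, so u - w = 1, v - u = c - 1
        have huw : u - w = 1 := Fin.ext (by rw [h, fin_val_one hm])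
        have : v - u = c - 1 := by rw [← huw]; ring
        rw [this, fin_val_sub, fin_val_one hm]
        split_ifs with h' <;> omega
      · -- (w - u).val = 1, v - u = c + 1
        have hwu : w - u = 1 := Fin.ext (by rw [h, fin_val_one hm])
        have : v - u = c + 1 := by rw [← hwu]; ring
        rw [this, fin_val_add, fin_val_one hm]
        split_ifs with h' <;> omega
    calc min (v - u).val (m - (v - u).val)
        ≤ min (v - w).val (m - (v - w).val) + 1 := hstep
      _ ≤ q.length + 1 := by omega
      _ = (SimpleGraph.Walk.cons h q).length := by simp [Nat.add_comm]

lemma cyc_dist (hm : 2 ≤ m) (u v : Fin m) :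
    (SimpleGraph.cycleGraph m).dist u v = min (v - u).val (m - (v - u).val) := by
  refine le_antisymm ?_ ?_
  · rcases eq_or_ne u v with rfl | hne
    · simp
    · refine le_min (cyc_dist_le hm u v) ?_
      have h1 : v - u ≠ 0 := fun h => hne (by
        have : v = u := by
          have := sub_eq_zero.mp h
          exact this
        exact this.symm)
      have : (u - v).val = m - (v - u).val := by
        rw [show u - v = -(v - u) by ring, fin_val_neg _ h1]
      rw [← this, SimpleGraph.dist_comm]
      exact cyc_dist_le hm v u
  · obtain ⟨p, hp⟩ := (cyc_reachable hm u v).exists_walk_length_eq_dist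
    rw [← hp]
    exact cyc_min_le_length hm p

omit [NeZero m] in
/-- counting: no three cyclically consecutive elements gives `3|F| ≤ 2m`. -/
lemma count_no_three (F : Finset (Fin m)) [NeZero m]
    (h : ∀ v : Fin m, ¬(v ∈ F ∧ v + 1 ∈ F ∧ v + 2 ∈ F)) :
    3 * F.card ≤ 2 * m := by
  classical
  have key : ∀ c : Fin m, (∑ v : Fin m, if v + c ∈ F then 1 else 0) = F.card := by
    intro c
    rw [Fintype.sum_equiv (Equiv.addRight c)
      (fun v => if v + c ∈ F then 1 else 0) (fun w => if w ∈ F then 1 else 0)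
      (fun v => rfl)]
    simp [Finset.sum_ite_mem]
  have hsum : (∑ v : Fin m, ((if v + 0 ∈ F then 1 else 0) + (if v + 1 ∈ F then 1 else 0)
      + (if v + 2 ∈ F then 1 else 0))) = 3 * F.card := by
    rw [Finset.sum_add_distrib, Finset.sum_add_distrib, key 0, key 1, key 2]
    ring
  have hle : (∑ v : Fin m, ((if v + 0 ∈ F then 1 else 0) + (if v + 1 ∈ F then 1 else 0)
      + (if v + 2 ∈ F then 1 else 0))) ≤ ∑ _v : Fin m, 2 := by
    refine Finset.sum_le_sum fun v _ => ?_
    have := h v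
    rw [add_zero] at *
    split_ifs <;> simp_all
  simp only [Finset.sum_const, Finset.card_univ, Fintype.card_fin, smul_eq_mul] at hle
  omega

end aux

/-- In the even cycle `C_{2n}`, every center set `A` satisfies `|A| ≤ ⌊4n/3⌋` or
`|A| = 2n`. -/
theorem card_centerSet_evenCycle (n : ℕ) (hn : 2 ≤ n) (A : Set (Fin (2 * n)))
    (hA : IsCenterSet (SimpleGraph.cycleGraph (2 * n)) A) :
    A.ncard ≤ 4 * n / 3 ∨ A.ncard = 2 * n := by
  classical
  obtain ⟨S, hS, rfl⟩ := hA
  have hm2 : 2 ≤ 2 * n := by omega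
  haveI : NeZero (2 * n) := ⟨by omega⟩
  set G := SimpleGraph.cycleGraph (2 * n) with hG
  -- eccentricity is at most n
  have hen : ∀ v, sEcc G S v ≤ n := by
    intro v
    refine Finset.sup_le fun x _ => ?_
    rw [cyc_dist hm2]
    have := (x - v).is_lt
    omega
  by_cases hall : ∀ w, sEcc G S w = n
  · -- everything is a center, A = univ
    right
    have huniv : sCenter G S = Set.univ := by
      ext v
      simp only [sCenter, Set.mem_setOf_eq, Set.mem_univ, iff_true]
      intro w
      rw [hall, hall]
    rw [huniv, Set.ncard_univ, Nat.card_eq_fintype_card, Fintype.card_fin]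
  · left
    push_neg at hall
    obtain ⟨w₀, hw₀⟩ := hall
    have hw₀' : sEcc G S w₀ < n := lt_of_le_of_ne (hen w₀) hw₀
    -- no three consecutive vertices in the center
    have h3 : ∀ v : Fin (2 * n),
        ¬(v ∈ sCenter G S ∧ v + 1 ∈ sCenter G S ∧ v + 2 ∈ sCenter G S) := by
      rintro v ⟨h0, h1, h2⟩
      obtain ⟨x, hxS, hx⟩ := Finset.exists_mem_eq_sup S hS fun x => G.dist (v + 1) x
      have hxd : G.dist (v + 1) x = sEcc G S (v + 1) := hx.symm
      have hm0n : sEcc G S (v + 1) < n := lt_of_le_of_lt (h1 w₀) hw₀'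
      have hcv := (x - (v + 1)).is_lt
      have hdist1 : min (x - (v + 1)).val (2 * n - (x - (v + 1)).val) = sEcc G S (v + 1) := by
        rw [← hxd, cyc_dist hm2]
      rcases le_or_gt (x - (v + 1)).val n with hcn | hcn
      · -- x is on the + side: distance from v is sEcc(v+1) + 1
        have hxv : x - v = (x - (v + 1)) + 1 := by ring
        have hdv : G.dist v x = sEcc G S (v + 1) + 1 := by
          rw [cyc_dist hm2, hxv, fin_val_add, fin_val_one hm2]
          rw [if_pos (by omega)]
          omega
        have hle : sEcc G S (v + 1) + 1 ≤ sEcc G S v := by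
          rw [← hdv]
          exact Finset.le_sup hxS
        have hmem : sEcc G S v ≤ sEcc G S (v + 1) := h0 (v + 1)
        omega
      · -- x is on the - side: distance from v+2 is sEcc(v+1) + 1
        have hxv : x - (v + 2) = (x - (v + 1)) - 1 := by ring
        have hdv : G.dist (v + 2) x = sEcc G S (v + 1) + 1 := by
          rw [cyc_dist hm2, hxv, fin_val_sub, fin_val_one hm2]
          rw [if_pos (by omega)]
          omega
        have hle : sEcc G S (v + 1) + 1 ≤ sEcc G S (v + 2) := by
          rw [← hdv]
          exact Finset.le_sup hxS
        have hmem : sEcc G S (v + 2) ≤ sEcc G S (v + 1) := h2 (v + 1)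
        omega
    -- counting
    have hfin : (sCenter G S).Finite := Set.toFinite _
    have hcard : (sCenter G S).ncard = hfin.toFinset.card :=
      Set.ncard_eq_toFinset_card _ hfin
    have h3' : ∀ v : Fin (2 * n),
        ¬(v ∈ hfin.toFinset ∧ v + 1 ∈ hfin.toFinset ∧ v + 2 ∈ hfin.toFinset) := by
      intro v hv
      simp only [Set.Finite.mem_toFinset] at hv
      exact h3 v hv
    have hcount := count_no_three hfin.toFinset h3'
    rw [hcard]
    rw [Nat.le_div_iff_mul_le (by norm_num)]
    omega
end

section
/- For every m with 1 ≤ m ≤ ⌊4n/3⌋, there exists a nonempty subset S of the vertices of the even cycle C_{2n} such that |C_S(C_{2n})| = m. -/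
open SimpleGraph Finset
open Fin.CommRing

lemma modTwoCases (x N : ℕ) (h : x < 2 * N) :
    (x % N = x ∧ x < N) ∨ (x % N = x - N ∧ N ≤ x) := by
  rcases Nat.lt_or_ge x N with h' | h'
  · exact Or.inl ⟨Nat.mod_eq_of_lt h', h'⟩
  · refine Or.inr ⟨?_, h'⟩
    rw [Nat.mod_eq_sub_mod h']
    exact Nat.mod_eq_of_lt (by omega)

lemma finSubVal {N : ℕ} [NeZero N] (a b : Fin N) : (a - b).val = (N - b.val + a.val) % N := by
  rw [Fin.sub_def]

/-- `(b - a).val` in terms of `(a - b).val`. -/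
lemma finSubValComm {N : ℕ} [NeZero N] (a b : Fin N) :
    (b - a).val = if (a - b).val = 0 then 0 else N - (a - b).val := by
  have hb := b.isLt; have ha := a.isLt
  have h1 := finSubVal a b
  have h2 := finSubVal b a
  have e1 := modTwoCases (N - b.val + a.val) N (by omega)
  have e2 := modTwoCases (N - a.val + b.val) N (by omega)
  split <;> omega

lemma cycle_dist_le_forward {N : ℕ} (u : Fin (N + 2)) (k : ℕ) :
    (cycleGraph (N + 2)).dist u (u + (k : Fin (N + 2))) ≤ k := by
  induction k with
  | zero => simp
  | succ k ih =>
    have hc : ((k + 1 : ℕ) : Fin (N + 2)) = (k : Fin (N + 2)) + 1 := by push_cast; ring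
    have hadj : (cycleGraph (N + 2)).Adj (u + (k : Fin (N + 2)))
        (u + (k : Fin (N + 2)) + 1) := by
      rw [cycleGraph_adj']
      right
      have : u + (k : Fin (N+2)) + 1 - (u + (k : Fin (N+2))) = 1 := by ring
      rw [this, Fin.val_one]
    calc (cycleGraph (N + 2)).dist u (u + ((k+1 : ℕ) : Fin (N+2)))
        ≤ (cycleGraph (N + 2)).dist u (u + (k : Fin (N+2)))
          + (cycleGraph (N + 2)).dist (u + (k : Fin (N+2))) (u + ((k+1:ℕ) : Fin (N+2))) :=
          (cycleGraph_connected).dist_triangle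
      _ ≤ k + 1 := by
          have h1 : (cycleGraph (N + 2)).dist (u + (k : Fin (N+2)))
              (u + ((k+1:ℕ) : Fin (N+2))) ≤ 1 := by
            rw [hc, ← add_assoc]
            exact le_trans (SimpleGraph.dist_le hadj.toWalk) (by simp)
          omega

lemma cycle_walk_lower {N : ℕ} {u v : Fin (N + 2)} (p : (cycleGraph (N + 2)).Walk u v) :
    min (v - u).val ((N + 2) - (v - u).val) ≤ p.length := by
  induction p with
  | nil => simp
  | @cons u x v h p ih =>
    rw [cycleGraph_adj'] at h
    have hb := (v - x).isLt
    have key : (v - u) = (v - x) + (x - u) := by ring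
    have hval : (v - u).val = ((v - x).val + (x - u).val) % (N + 2) := by
      rw [key, Fin.val_add]
    simp only [SimpleGraph.Walk.length_cons]
    rcases h with h | h
    · -- (u - x).val = 1, so (x - u).val = N + 1
      have hx : (x - u).val = (N + 2) - 1 := by
        have h2 := finSubValComm u x
        rw [h] at h2
        simpa using h2
      rw [hx] at hval
      have := modTwoCases ((v - x).val + (N + 2 - 1)) (N + 2) (by omega)
      omega
    · rw [h] at hval
      have := modTwoCases ((v - x).val + 1) (N + 2) (by omega)
      omega

lemma cycle_dist_eq {N : ℕ} (hN : 2 ≤ N) (u v : Fin N) :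
    (cycleGraph N).dist u v = min (v - u).val (N - (v - u).val) := by
  obtain ⟨M, rfl⟩ : ∃ M, N = M + 2 := ⟨N - 2, by omega⟩
  apply le_antisymm
  · -- upper bound
    have h1 : (cycleGraph (M + 2)).dist u v ≤ (v - u).val := by
      have := cycle_dist_le_forward u (v - u).val
      rwa [Fin.cast_val_eq_self, add_sub_cancel] at this
    have h2 : (cycleGraph (M + 2)).dist u v ≤ (u - v).val := by
      have := cycle_dist_le_forward v (u - v).val
      rwa [Fin.cast_val_eq_self, add_sub_cancel, SimpleGraph.dist_comm] at this
    have h3 := finSubValComm v u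
    have h4 := (v - u).isLt
    split_ifs at h3 <;> omega
  · obtain ⟨p, hp⟩ := (cycleGraph_connected (n := M + 1)).exists_walk_length_eq_dist u v
    calc min (v - u).val ((M + 2) - (v - u).val) ≤ p.length := cycle_walk_lower p
      _ = _ := hp

/-- For every `m` with `1 ≤ m ≤ ⌊4n/3⌋` there is a nonempty set `S` of vertices of the
even cycle `C_{2n}` whose `S`-center has exactly `m` vertices. -/
theorem exists_centerSet_card_evenCycle (n m : ℕ) (hn : 2 ≤ n) (hm : 1 ≤ m)
    (hmn : m ≤ 4 * n / 3) :
    ∃ S : Finset (Fin (2 * n)), S.Nonempty ∧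
      (sCenter (SimpleGraph.cycleGraph (2 * n)) S).ncard = m := by
  haveI : NeZero (2 * n) := ⟨by omega⟩
  have h3m : 3 * m ≤ 4 * n := by omega
  set c : ℕ := 3 * (m / 2) + m % 2 with hc
  have hcN : c ≤ 2 * n := by omega
  set F : Finset (Fin (2 * n)) :=
    univ.filter (fun x => x.val < c ∧ x.val % 3 < 2) with hF
  have hmemF : ∀ x : Fin (2 * n), x ∈ F ↔ x.val < c ∧ x.val % 3 < 2 := by
    intro x; simp [hF]
  -- the "last" vertex is never in F
  have hlast : ∀ x : Fin (2 * n), x.val = 2 * n - 1 → x ∉ F := by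
    intro x hx hmem
    rw [hmemF] at hmem
    obtain ⟨h1, h2⟩ := hmem
    have hceq : c = 2 * n := by omega
    have hq : 2 * n = 3 * (m / 2) := by omega
    have : x.val % 3 = 2 := by omega
    omega
  set half : Fin (2 * n) := ((n : ℕ) : Fin (2 * n)) with hhalf
  have hhv : half.val = n := by
    rw [hhalf, Fin.val_natCast, Nat.mod_eq_of_lt (by omega)]
  have hdist : ∀ u v : Fin (2 * n),
      (cycleGraph (2 * n)).dist u v = min (v - u).val (2 * n - (v - u).val) :=
    cycle_dist_eq (by omega)
  -- distance bounds
  have hub : ∀ v x : Fin (2 * n), (cycleGraph (2 * n)).dist v x ≤ n := by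
    intro v x; rw [hdist]; have := (x - v).isLt; omega
  have hub' : ∀ v x : Fin (2 * n), x ≠ v + half → (cycleGraph (2 * n)).dist v x ≤ n - 1 := by
    intro v x hne
    rw [hdist]
    have hlt := (x - v).isLt
    have han : (x - v).val ≠ n := by
      intro han
      apply hne
      have : x - v = half := by
        apply Fin.ext; rw [hhv, han]
      rw [← this]; ring
    omega
  have hhalfdist : ∀ v : Fin (2 * n), (cycleGraph (2 * n)).dist v (v + half) = n := by
    intro v
    rw [hdist]
    have : v + half - v = half := by ring
    rw [this, hhv]
    omega
  -- in every 3 consecutive vertices, one is outside F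
  have hwin : ∀ v : Fin (2 * n), ∃ t : ℕ, n - 1 ≤ t ∧ t ≤ n + 1 ∧
      (v + (t : Fin (2 * n))) ∉ F := by
    intro v
    by_contra hcon
    push_neg at hcon
    have key : ∀ t : ℕ, n - 1 ≤ t → t ≤ n + 1 → ((v.val + t) % (2 * n) < c ∧
        (v.val + t) % (2 * n) % 3 < 2) := by
      intro t h1 h2
      have := hcon t h1 h2
      rw [hmemF] at this
      rwa [Fin.val_add, Fin.val_natCast, Nat.add_mod_mod] at this
    have k1 := key (n - 1) le_rfl (by omega)
    have k2 := key n (by omega) (by omega)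
    have k3 := key (n + 1) (by omega) le_rfl
    have hv := v.isLt
    have e1 := modTwoCases (v.val + (n - 1)) (2 * n) (by omega)
    have e2 := modTwoCases (v.val + n) (2 * n) (by omega)
    have e3 := modTwoCases (v.val + (n + 1)) (2 * n) (by omega)
    omega
  -- value of sEcc
  have hseccA : ∀ v : Fin (2 * n), v + half ∉ F →
      sEcc (cycleGraph (2 * n)) Fᶜ v = n := by
    intro v hv
    apply le_antisymm
    · exact Finset.sup_le fun x _ => hub v x
    · have hmem : v + half ∈ Fᶜ := Finset.mem_compl.mpr hv
      calc n = (cycleGraph (2 * n)).dist v (v + half) := (hhalfdist v).symm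
        _ ≤ _ := Finset.le_sup hmem
  have hseccB : ∀ v : Fin (2 * n), v + half ∈ F →
      sEcc (cycleGraph (2 * n)) Fᶜ v = n - 1 := by
    intro v hv
    apply le_antisymm
    · apply Finset.sup_le
      intro x hx
      apply hub'
      intro hxe
      rw [hxe] at hx
      exact (Finset.mem_compl.mp hx) hv
    · obtain ⟨t, ht1, ht2, ht3⟩ := hwin v
      have hmem : v + (t : Fin (2 * n)) ∈ Fᶜ := Finset.mem_compl.mpr ht3
      have : n - 1 ≤ (cycleGraph (2 * n)).dist v (v + (t : Fin (2 * n))) := by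
        rw [hdist]
        have : v + (t : Fin (2 * n)) - v = (t : Fin (2 * n)) := by ring
        rw [this, Fin.val_natCast, Nat.mod_eq_of_lt (by omega)]
        omega
      exact le_trans this (Finset.le_sup hmem)
  -- F is nonempty: 0 ∈ F
  have h0F : (0 : Fin (2 * n)) ∈ F := by
    rw [hmemF, Fin.val_zero]
    constructor <;> omega
  -- Fᶜ is nonempty
  have hSne : (Fᶜ : Finset (Fin (2 * n))).Nonempty := by
    refine ⟨⟨2 * n - 1, by omega⟩, Finset.mem_compl.mpr (hlast _ rfl)⟩
  refine ⟨Fᶜ, hSne, ?_⟩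
  -- identify the center
  have hcenter : sCenter (cycleGraph (2 * n)) Fᶜ =
      ↑(F.image (fun x => x - half)) := by
    ext v
    simp only [sCenter, Set.mem_setOf_eq, Finset.coe_image, Set.mem_image, Finset.mem_coe]
    constructor
    · intro hv
      by_contra hcon
      have hvF : v + half ∉ F := by
        intro hmem
        exact hcon ⟨v + half, hmem, by ring⟩
      have h1 := hseccA v hvF
      have h2 := hseccB (0 - half) (by rw [sub_add_cancel]; exact h0F)
      have := hv (0 - half)
      omega
    · rintro ⟨x, hx, rfl⟩
      intro w
      have h1 : sEcc (cycleGraph (2 * n)) Fᶜ (x - half) = n - 1 :=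
        hseccB _ (by rw [sub_add_cancel]; exact hx)
      rcases Finset.decidableMem (w + half) F with hw | hw
      · rw [h1, hseccA w hw]; omega
      · rw [h1, hseccB w hw]
  rw [hcenter, Set.ncard_coe_finset,
    Finset.card_image_of_injective _ (sub_left_injective)]
  -- finally, F.card = m
  have hg : ∀ i : ℕ, i < m → 3 * (i / 2) + i % 2 < 2 * n := by omega
  have : F = Finset.image (fun i : Fin m => (⟨3 * (i.val / 2) + i.val % 2, hg i.val i.isLt⟩ :
      Fin (2 * n))) Finset.univ := by
    ext x
    rw [hmemF]
    simp only [Finset.mem_image, Finset.mem_univ, true_and]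
    constructor
    · rintro ⟨h1, h2⟩
      refine ⟨⟨2 * (x.val / 3) + x.val % 3, by omega⟩, ?_⟩
      apply Fin.ext
      simp only
      omega
    · rintro ⟨i, rfl⟩
      have := i.isLt
      constructor <;> simp only <;> omega
  rw [this, Finset.card_image_of_injective _ ?_, Finset.card_univ, Fintype.card_fin]
  intro i j hij
  have h1 : 3 * (i.val / 2) + i.val % 2 = 3 * (j.val / 2) + j.val % 2 :=
    congrArg Fin.val hij
  apply Fin.ext
  omega
end
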